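/- Let T be an irreducible Salem polynomial of degree m ≥ 4 with dominant root β > 1, and let P ∈ ℝ[z] be an expansive polynomial of degree m satisfying (z-1)T(z) = zP(z) - P*(z). Then P(1/β)·T'(1/β) < 0 and P(β)·T'(β) > 0. -/

import Mathlib

open Polynomial

private lemma eval_reflect_aux (N : ℕ) (P : ℝ[X]) (hP : P.natDegree ≤ N) (x : ℝ) (hx : x ≠ 0) :
    (P.reflect N).eval x = x ^ N * P.eval x⁻¹ := by
  letI := invertibleOfNonzero (inv_ne_zero hx)
  have h := eval₂_reflect_mul_pow (RingHom.id ℝ) x⁻¹ N P hP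
  rw [invOf_eq_inv, inv_inv] at h
  simp only [eval₂_eq_eval_map, Polynomial.map_id] at h
  have hxN : (x : ℝ) ^ N ≠ 0 := pow_ne_zero _ hx
  field_simp at h
  simp only [one_div] at h
  rw [← h, inv_pow, mul_comm (eval x (reflect N P)), ← mul_assoc, mul_inv_cancel₀ hxN, one_mul]

private lemma pos_of_no_root_aux (W : ℝ[X]) (hlc : 0 ≤ W.leadingCoeff) (hdeg : 0 < W.degree)
    (hroots : ∀ t : ℝ, W.eval t ≠ 0) (t : ℝ) : 0 < W.eval t := by
  rcases lt_or_gt_of_ne (hroots t) with hneg | hpos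
  · exfalso
    have htop := W.tendsto_atTop_of_leadingCoeff_nonneg hdeg hlc
    obtain ⟨x, hx1, hx2⟩ :=
      ((htop.eventually_ge_atTop 0).and (Filter.eventually_ge_atTop t)).exists
    have hsub := intermediate_value_Icc hx2 W.continuousOn
    have : (0:ℝ) ∈ Set.Icc (W.eval t) (W.eval x) := Set.mem_Icc.mpr ⟨le_of_lt hneg, hx1⟩
    obtain ⟨c, _, hc⟩ := hsub this
    exact hroots c hc
  · exact hpos

theorem sign_conditions_at_beta
    (T : ℤ[X]) (m : ℕ) (hm : 4 ≤ m)
    (hTmonic : T.Monic) (hTirr : Irreducible T) (hTdeg : T.natDegree = m)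
    (β : ℝ) (hβ : 1 < β) (hβroot : aeval β T = 0)
    (houtside : ∀ z : ℂ, aeval z T = 0 → 1 < ‖z‖ → z = (β : ℂ))
    (honcircle : ∃ z : ℂ, aeval z T = 0 ∧ ‖z‖ = 1)
    (P : ℝ[X]) (hPdeg : P.natDegree = m)
    (hPexp : ∀ z : ℂ, aeval z P = 0 → 1 < ‖z‖)
    (hassoc : (X - 1) * T.map (Int.castRingHom ℝ) = X * P - P.reflect m) :
    P.eval (1 / β) * (derivative (T.map (Int.castRingHom ℝ))).eval (1 / β) < 0 ∧
      0 < P.eval β * (derivative (T.map (Int.castRingHom ℝ))).eval β := by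
  set Tr := T.map (Int.castRingHom ℝ) with hTrdef
  have hβ0 : (0:ℝ) < β := lt_trans one_pos hβ
  have hβne : β ≠ 0 := ne_of_gt hβ0
  have hβinv0 : (0:ℝ) < β⁻¹ := inv_pos.mpr hβ0
  have hβinv1 : β⁻¹ < 1 := by
    rw [inv_lt_one_iff₀]; right; exact hβ
  have hβinvβ : β⁻¹ ≠ β := ne_of_lt (lt_trans hβinv1 hβ)
  have hTrβ : Tr.eval β = 0 := by
    rw [hTrdef, eval_map, ← algebraMap_int_eq, ← aeval_def, hβroot]
  obtain ⟨k, hk⟩ : ∃ k, m = k + 1 := ⟨m - 1, by omega⟩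
  -- integer points are not roots of T
  have hnoZ : ∀ c : ℤ, T.eval c ≠ 0 := by
    intro c hc
    obtain ⟨q, hq⟩ := dvd_iff_isRoot.mpr hc
    have hT0 : T ≠ 0 := hTmonic.ne_zero
    have hq0 : q ≠ 0 := by rintro rfl; simp at hq; exact hT0 hq
    rcases hTirr.isUnit_or_isUnit hq with hu | hu
    · exact (not_isUnit_X_sub_C c) hu
    · have h0 : q.natDegree = 0 := natDegree_eq_zero_of_isUnit hu
      have : T.natDegree = 1 + 0 := by
        rw [hq, natDegree_mul (X_sub_C_ne_zero c) hq0, natDegree_X_sub_C, h0]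
      omega
  have hnoR : ∀ c : ℤ, Tr.eval (c : ℝ) ≠ 0 := by
    intro c hc
    apply hnoZ c
    have : Tr.eval ((c:ℤ) : ℝ) = ((T.eval c : ℤ) : ℝ) := by
      rw [hTrdef, eval_map]
      exact eval₂_at_apply (Int.castRingHom ℝ) c
    rw [this] at hc
    exact_mod_cast hc
  -- complex roots from real roots
  have hcroot : ∀ t : ℝ, Tr.eval t = 0 → aeval (t : ℂ) T = 0 := by
    intro t ht
    have h1 : ((Tr.eval t : ℝ) : ℂ) = aeval (t : ℂ) T := by
      rw [hTrdef, eval_map, aeval_def]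
      calc ((eval₂ (Int.castRingHom ℝ) t T : ℝ) : ℂ)
          = Complex.ofRealHom (eval₂ (Int.castRingHom ℝ) t T) := rfl
        _ = eval₂ (Complex.ofRealHom.comp (Int.castRingHom ℝ)) (Complex.ofRealHom t) T :=
            hom_eval₂ (p := T) (f := Int.castRingHom ℝ) (g := Complex.ofRealHom) t
        _ = eval₂ (algebraMap ℤ ℂ) ((t:ℝ):ℂ) T := by
            rw [Subsingleton.elim (Complex.ofRealHom.comp (Int.castRingHom ℝ))
              (algebraMap ℤ ℂ)]
            rfl
    rw [ht] at h1
    simpa using h1.symm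
  -- key functional identity
  have key : ∀ t : ℝ, t ≠ 0 →
      (t - 1) * Tr.eval t = t * P.eval t - t ^ m * P.eval t⁻¹ := by
    intro t ht
    have h := congrArg (eval t) hassoc
    simpa [eval_reflect_aux m P (le_of_eq hPdeg) t ht] using h
  -- root transfer t ↦ t⁻¹
  have transfer : ∀ t : ℝ, t ≠ 0 → t ≠ 1 → Tr.eval t = 0 → Tr.eval t⁻¹ = 0 := by
    intro t ht ht1 hroot
    have h1 := key t ht
    rw [hroot, mul_zero] at h1
    have hPt : P.eval t = t ^ k * P.eval t⁻¹ := by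
      have h2 : t * P.eval t = t * (t ^ k * P.eval t⁻¹) := by
        rw [hk] at h1; rw [pow_succ] at h1; nlinarith [h1]
      exact mul_left_cancel₀ ht h2
    have h3 := key t⁻¹ (inv_ne_zero ht)
    rw [inv_inv, hPt] at h3
    have hrhs : t⁻¹ * P.eval t⁻¹ - (t⁻¹) ^ m * (t ^ k * P.eval t⁻¹) = 0 := by
      rw [hk, inv_pow, pow_succ]; field_simp; ring
    rw [hrhs] at h3
    have ht1' : t⁻¹ - 1 ≠ 0 :=
      sub_ne_zero.mpr (fun h => ht1 (inv_eq_one.mp h))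
    exact (mul_eq_zero.mp h3).resolve_left ht1'
  have hTrβinv : Tr.eval β⁻¹ = 0 := transfer β hβne (ne_of_gt hβ) hTrβ
  -- m is even and P(-1) = Tr(-1)
  have hPm1 : P.eval (-1) = Tr.eval (-1) := by
    have h := key (-1) (by norm_num)
    rcases Nat.even_or_odd m with he | ho
    · rw [he.neg_one_pow] at h
      norm_num at h
      linarith [h]
    · rw [ho.neg_one_pow] at h
      norm_num at h
      exfalso
      have : Tr.eval ((-1 : ℤ) : ℝ) = 0 := by push_cast; linarith [h]
      exact hnoR (-1) this
  -- separability : simple roots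
  have hsep : Tr.Separable := by
    have hprim : T.IsPrimitive := hTmonic.isPrimitive
    have hQ : Irreducible (T.map (Int.castRingHom ℚ)) :=
      (IsPrimitive.Int.irreducible_iff_irreducible_map_cast hprim).mp hTirr
    have hsepQ : (T.map (Int.castRingHom ℚ)).Separable := hQ.separable
    have : Tr = (T.map (Int.castRingHom ℚ)).map (algebraMap ℚ ℝ) := by
      rw [hTrdef, map_map]; congr 1
    rw [this]
    exact hsepQ.map
  have hder : ∀ t : ℝ, Tr.eval t = 0 → (derivative Tr).eval t ≠ 0 := by
    intro t ht hd
    obtain ⟨a, b, hab⟩ := hsep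
    have := congrArg (eval t) hab
    simp [ht, hd] at this
  -- factorization Tr = (X - β)(X - β⁻¹) W
  have hfac1 : (X - C β) * (Tr /ₘ (X - C β)) = Tr := mul_divByMonic_eq_iff_isRoot.mpr hTrβ
  set W1 := Tr /ₘ (X - C β) with hW1def
  have hW1βinv : W1.eval β⁻¹ = 0 := by
    have := congrArg (eval β⁻¹) hfac1
    rw [hTrβinv] at this
    simp only [eval_mul, eval_sub, eval_X, eval_C] at this
    exact (mul_eq_zero.mp this).resolve_left (sub_ne_zero.mpr hβinvβ)
  have hfac2 : (X - C β⁻¹) * (W1 /ₘ (X - C β⁻¹)) = W1 := mul_divByMonic_eq_iff_isRoot.mpr hW1βinv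
  set W := W1 /ₘ (X - C β⁻¹) with hWdef
  have hfac : Tr = (X - C β) * ((X - C β⁻¹) * W) := by rw [hfac2, hfac1]
  -- derivative values
  have hTrm : Tr.Monic := hTmonic.map _
  have hdβ : (derivative Tr).eval β = (β - β⁻¹) * W.eval β := by
    rw [hfac]; simp [derivative_mul]
  have hdβinv : (derivative Tr).eval β⁻¹ = (β⁻¹ - β) * W.eval β⁻¹ := by
    rw [hfac]; simp [derivative_mul]
  have hWβ : W.eval β ≠ 0 := by
    intro h; exact hder β hTrβ (by rw [hdβ, h, mul_zero])
  have hWβinv : W.eval β⁻¹ ≠ 0 := by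
    intro h; exact hder β⁻¹ hTrβinv (by rw [hdβinv, h, mul_zero])
  -- W has no real roots
  have hWroots : ∀ t : ℝ, W.eval t ≠ 0 := by
    intro t hWt
    have hTrt : Tr.eval t = 0 := by rw [hfac]; simp [hWt]
    have ht0 : t ≠ 0 := by
      intro h; rw [h] at hTrt
      exact hnoR 0 (by exact_mod_cast hTrt)
    have ht1 : t ≠ 1 := by
      intro h; rw [h] at hTrt
      exact hnoR 1 (by exact_mod_cast hTrt)
    have htm1 : t ≠ -1 := by
      intro h; rw [h] at hTrt
      exact hnoR (-1) (by push_cast; exact_mod_cast hTrt)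
    rcases lt_or_ge 1 |t| with habs | habs
    · -- |t| > 1 : t = β, contradiction with W(β) ≠ 0
      have : (t : ℂ) = (β : ℂ) := by
        apply houtside _ (hcroot t hTrt)
        rwa [Complex.norm_real, Real.norm_eq_abs]
      have htβ : t = β := by exact_mod_cast this
      rw [htβ] at hWt; exact hWβ hWt
    · -- |t| ≤ 1, t ≠ ±1 : |t| < 1, t⁻¹ is a root of modulus > 1
      have habs' : |t| < 1 := lt_of_le_of_ne habs (by
        intro h
        rcases abs_eq (le_of_lt one_pos) |>.mp h with h1 | h1
        · exact ht1 h1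
        · exact htm1 h1)
      have hinv : Tr.eval t⁻¹ = 0 := transfer t ht0 ht1 hTrt
      have habsinv : 1 < |t⁻¹| := by
        rw [abs_inv]
        exact (one_lt_inv_iff₀).mpr ⟨abs_pos.mpr ht0, habs'⟩
      have : ((t⁻¹ : ℝ) : ℂ) = (β : ℂ) := by
        apply houtside _ (hcroot t⁻¹ hinv)
        rwa [Complex.norm_real, Real.norm_eq_abs]
      have htβ : t⁻¹ = β := by exact_mod_cast this
      have : t = β⁻¹ := by rw [← htβ, inv_inv]
      rw [this] at hWt; exact hWβinv hWt
  -- W is positive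
  have hWlc : W.leadingCoeff = 1 := by
    have h := hTrm
    rw [hfac] at h
    have := h.leadingCoeff
    rwa [leadingCoeff_mul, leadingCoeff_mul, leadingCoeff_X_sub_C, leadingCoeff_X_sub_C,
      one_mul, one_mul] at this
  have hWne : W ≠ 0 := fun h => by simp [h] at hWlc
  have hWdeg : 0 < W.degree := by
    have hinj : Function.Injective (Int.castRingHom ℝ) := fun a b h => by
      rw [eq_intCast, eq_intCast] at h; exact_mod_cast h
    have hTrdeg : Tr.natDegree = m := by
      rw [hTrdef, natDegree_map_eq_of_injective hinj, hTdeg]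
    have : Tr.natDegree = 1 + (1 + W.natDegree) := by
      rw [hfac, natDegree_mul (X_sub_C_ne_zero β) (mul_ne_zero (X_sub_C_ne_zero β⁻¹) hWne),
        natDegree_mul (X_sub_C_ne_zero β⁻¹) hWne, natDegree_X_sub_C, natDegree_X_sub_C]
    have hWnat : 0 < W.natDegree := by omega
    exact natDegree_pos_iff_degree_pos.mp hWnat
  have hWpos : ∀ t : ℝ, 0 < W.eval t :=
    pos_of_no_root_aux W (by rw [hWlc]; norm_num) hWdeg hWroots
  -- signs of derivative
  have hdβpos : 0 < (derivative Tr).eval β := by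
    rw [hdβ]; exact mul_pos (by linarith) (hWpos β)
  have hdβinvneg : (derivative Tr).eval β⁻¹ < 0 := by
    rw [hdβinv]
    have := hWpos β⁻¹
    nlinarith
  -- P is positive at -1 and has no roots in [-1,1]
  have hTrm1pos : 0 < Tr.eval (-1) := by
    rw [hfac]
    simp only [eval_mul, eval_sub, eval_X, eval_C]
    have h2 : (-1 - β⁻¹) * W.eval (-1) < 0 :=
      mul_neg_of_neg_of_pos (by linarith) (hWpos (-1))
    exact mul_pos_of_neg_of_neg (by linarith) h2
  have hPnoroot : ∀ t : ℝ, -1 ≤ t → t ≤ 1 → P.eval t ≠ 0 := by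
    intro t h1 h2 hPt
    have hz : aeval (t : ℂ) P = 0 := by
      rw [show ((t:ℝ):ℂ) = algebraMap ℝ ℂ t from (congrFun Complex.coe_algebraMap t).symm,
        aeval_algebraMap_apply_eq_algebraMap_eval, hPt]
      simp
    have h3 := hPexp _ hz
    rw [Complex.norm_real, Real.norm_eq_abs] at h3
    have h4 : |t| ≤ 1 := abs_le.mpr ⟨h1, h2⟩
    linarith
  have hPβinvpos : 0 < P.eval β⁻¹ := by
    by_contra hP
    push_neg at hP
    have hne := hPnoroot β⁻¹ (by linarith) (le_of_lt hβinv1)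
    have hPneg : P.eval β⁻¹ < 0 := lt_of_le_of_ne hP hne
    have hle : (-1:ℝ) ≤ β⁻¹ := by linarith
    have hsub := intermediate_value_Icc' hle P.continuousOn
    have hmem : (0:ℝ) ∈ Set.Icc (P.eval β⁻¹) (P.eval (-1)) :=
      Set.mem_Icc.mpr ⟨le_of_lt hPneg, by rw [hPm1]; exact le_of_lt hTrm1pos⟩
    obtain ⟨c, hc1, hc2⟩ := hsub hmem
    exact hPnoroot c hc1.1 (le_trans hc1.2 (le_of_lt hβinv1)) hc2
  have hPβpos : 0 < P.eval β := by
    have h := key β hβne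
    rw [hTrβ, mul_zero] at h
    have hβm : 0 < β ^ m := pow_pos hβ0 m
    nlinarith [mul_pos hβm hPβinvpos]
  refine ⟨?_, ?_⟩
  · rw [one_div]
    exact mul_neg_of_pos_of_neg hPβinvpos hdβinvneg
  · exact mul_pos hPβpos hdβpos
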